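/- Let A and P be arbitrary real quaternions, and let e₁ = 1, e₂ = i, e₃ = j, e₄ = k be the standard quaternion basis. Define the 4×4 real matrix M by letting M i j be the j-th real coordinate (in the order re, imI, imJ, imK) of the quaternion A * eᵢ * P. Then Mᵀ * M = (‖A‖² * ‖P‖²) • (identity matrix); in particular the columns of M are also pairwise orthogonal with common squared norm ‖A‖² * ‖P‖². -/

import Mathlib

set_option maxHeartbeats 1600000
open Quaternion Matrix

/-- The standard quaternion basis `1, i, j, k`. -/
noncomputable def quatBasis : Fin 4 → ℍ[ℝ]
  | 0 => 1
  | 1 => ⟨0, 1, 0, 0⟩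
  | 2 => ⟨0, 0, 1, 0⟩
  | 3 => ⟨0, 0, 0, 1⟩

/-- The real coordinates of a quaternion, in the order `re, imI, imJ, imK`. -/
def quatCoord (x : ℍ[ℝ]) : Fin 4 → ℝ
  | 0 => x.re
  | 1 => x.imI
  | 2 => x.imJ
  | 3 => x.imK

theorem euler_hurwitz_columns (A P : ℍ[ℝ])
    (M : Matrix (Fin 4) (Fin 4) ℝ)
    (hM : ∀ i j, M i j = quatCoord (A * quatBasis i * P) j) :
    Mᵀ * M = (‖A‖ ^ 2 * ‖P‖ ^ 2) • (1 : Matrix (Fin 4) (Fin 4) ℝ) ∧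
    (∀ i j : Fin 4, i ≠ j → ∑ k, M k i * M k j = 0) ∧
    (∀ i : Fin 4, ∑ k, (M k i) ^ 2 = ‖A‖ ^ 2 * ‖P‖ ^ 2) := by
  have hA : ‖A‖ ^ 2 = A.re ^ 2 + A.imI ^ 2 + A.imJ ^ 2 + A.imK ^ 2 := by
    rw [sq, ← Quaternion.normSq_eq_norm_mul_self, Quaternion.normSq_def']
  have hP : ‖P‖ ^ 2 = P.re ^ 2 + P.imI ^ 2 + P.imJ ^ 2 + P.imK ^ 2 := by
    rw [sq, ← Quaternion.normSq_eq_norm_mul_self, Quaternion.normSq_def']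
  have key : Mᵀ * M = (‖A‖ ^ 2 * ‖P‖ ^ 2) • (1 : Matrix (Fin 4) (Fin 4) ℝ) := by
    ext i j
    fin_cases i <;> fin_cases j <;>
      simp only [Matrix.mul_apply, Matrix.transpose_apply, Fin.sum_univ_four, hM,
        quatBasis, quatCoord, Matrix.smul_apply, Matrix.one_apply, hA, hP,
        Quaternion.re_mul, Quaternion.imI_mul, Quaternion.imJ_mul, Quaternion.imK_mul,
        Fin.mk_zero, Fin.mk_one, smul_eq_mul, Fin.isValue, re_one, imI_one, imJ_one, imK_one,
        if_true, if_false, Ne, not_false_iff, reduceIte, mul_one, mul_zero] <;> norm_num [Fin.ext_iff] <;> ring_nf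
  refine ⟨key, ?_, ?_⟩
  · intro i j hij
    have := congrFun (congrFun key i) j
    simpa [Matrix.mul_apply, Matrix.one_apply, hij] using this
  · intro i
    have := congrFun (congrFun key i) i
    simpa [Matrix.mul_apply, Matrix.one_apply, sq] using this
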